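/- Let n be a positive even integer and let X be a random variable taking values in {0,1}^n whose joint distribution is (n/2)-wise independent. Then the collision probability satisfies ∑_{x ∈ {0,1}^n} Pr(X = x)² ≤ (n+1)/2^n; equivalently, the Rényi entropy of order 2 satisfies H₂(X) ≥ n − log₂(n+1). -/

import Mathlib

/-- `p` is the probability mass function of a `k`-wise independent random variable
taking values in `{0,1}^n`. -/
def KWiseIndep (n k : ℕ) (p : (Fin n → Bool) → ℝ) : Prop :=
  ∀ S : Finset (Fin n), S.card ≤ k → ∀ a : Fin n → Bool,
    (∑ x ∈ Finset.univ.filter fun x => ∀ i ∈ S, x i = a i, p x) = (1 / 2 : ℝ) ^ S.card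

namespace RenyiAux

open Finset

/-- The sign `(-1)^b` of a bit. -/
noncomputable def sgn (b : Bool) : ℝ := if b then -1 else 1

lemma sgn_not (b : Bool) : sgn (!b) = - sgn b := by cases b <;> simp [sgn]

variable {n : ℕ}

/-- Fourier character. -/
noncomputable def chi (S : Finset (Fin n)) (x : Fin n → Bool) : ℝ := ∏ i ∈ S, sgn (x i)

/-- (Unnormalized) Fourier coefficient of `p`. -/
noncomputable def W (p : (Fin n → Bool) → ℝ) (S : Finset (Fin n)) : ℝ := ∑ x, p x * chi S x

lemma chi_congr (S : Finset (Fin n)) {x a : Fin n → Bool} (h : ∀ i ∈ S, x i = a i) :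
    chi S x = chi S a :=
  Finset.prod_congr rfl fun i hi => by rw [h i hi]

lemma orth (x y : Fin n → Bool) :
    ∑ S : Finset (Fin n), chi S x * chi S y = if x = y then (2:ℝ)^n else 0 := by
  have h1 : ∀ S : Finset (Fin n), chi S x * chi S y = ∏ i ∈ S, (sgn (x i) * sgn (y i)) := by
    intro S; rw [chi, chi, ← Finset.prod_mul_distrib]
  have h2 : ∏ i : Fin n, (sgn (x i) * sgn (y i) + 1)
      = ∑ S : Finset (Fin n), ∏ i ∈ S, (sgn (x i) * sgn (y i)) := by
    rw [Finset.prod_add, ← Finset.powerset_univ]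
    exact Finset.sum_congr rfl (by intro t ht; simp)
  simp_rw [h1]
  rw [← h2]
  by_cases hxy : x = y
  · subst hxy
    rw [if_pos rfl]
    have : ∀ i : Fin n, sgn (x i) * sgn (x i) + 1 = 2 := by
      intro i; cases x i <;> simp [sgn] <;> norm_num
    simp_rw [this]
    simp
  · rw [if_neg hxy]
    have : ∃ i, x i ≠ y i := by
      by_contra h; push_neg at h; exact hxy (funext h)
    obtain ⟨i, hi⟩ := this
    apply Finset.prod_eq_zero (Finset.mem_univ i)
    revert hi; cases x i <;> cases y i <;> simp [sgn]

lemma plancherel (p q : (Fin n → Bool) → ℝ) :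
    ∑ S : Finset (Fin n), W p S * W q S = 2^n * ∑ x, p x * q x := by
  have h1 : ∀ S : Finset (Fin n), W p S * W q S
      = ∑ x, ∑ y, (p x * q y) * (chi S x * chi S y) := by
    intro S
    rw [W, W, Finset.sum_mul_sum]
    exact Finset.sum_congr rfl fun x _ => Finset.sum_congr rfl fun y _ => by ring
  simp_rw [h1]
  rw [Finset.sum_comm]
  have h2 : ∀ x : Fin n → Bool, (∑ S : Finset (Fin n), ∑ y, (p x * q y) * (chi S x * chi S y))
      = 2^n * (p x * q x) := by
    intro x
    rw [Finset.sum_comm]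
    have h3 : ∀ y, (∑ S : Finset (Fin n), (p x * q y) * (chi S x * chi S y))
        = (p x * q y) * (if x = y then (2:ℝ)^n else 0) := by
      intro y; rw [← Finset.mul_sum, orth]
    simp_rw [h3]
    simp [mul_ite, Finset.sum_ite_eq]
    ring
  simp_rw [h2]
  rw [← Finset.mul_sum]

/-- Flipping bit `i`. -/
def bflip (i : Fin n) (x : Fin n → Bool) : Fin n → Bool := Function.update x i (!(x i))

lemma bflip_bflip (i : Fin n) (x : Fin n → Bool) : bflip i (bflip i x) = x := by
  funext j
  by_cases h : j = i
  · subst h; simp [bflip, Function.update]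
  · simp [bflip, Function.update, h]

lemma chi_bflip (S : Finset (Fin n)) (i : Fin n) (x : Fin n → Bool) :
    chi S (bflip i x) = (if i ∈ S then -1 else 1) * chi S x := by
  by_cases h : i ∈ S
  · rw [if_pos h, chi, chi]
    rw [← Finset.mul_prod_erase S _ h, ← Finset.mul_prod_erase S _ h]
    have h1 : sgn (bflip i x i) = - sgn (x i) := by
      simp [bflip, sgn_not]
    have h2 : ∀ j ∈ S.erase i, sgn (bflip i x j) = sgn (x j) := by
      intro j hj
      have : j ≠ i := Finset.ne_of_mem_erase hj
      simp [bflip, Function.update, this]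
    rw [h1, Finset.prod_congr rfl h2]
    ring
  · rw [if_neg h, one_mul, chi, chi]
    apply Finset.prod_congr rfl
    intro j hj
    have : j ≠ i := fun e => h (e ▸ hj)
    simp [bflip, Function.update, this]

lemma W_bflip (p : (Fin n → Bool) → ℝ) (i : Fin n) (S : Finset (Fin n)) :
    W (fun x => p (bflip i x)) S = (if i ∈ S then -1 else 1) * W p S := by
  rw [W, W, Finset.mul_sum]
  have h := Equiv.sum_comp (Function.Involutive.toPerm (bflip i) (bflip_bflip i))
    (fun x => p (bflip i x) * chi S x)
  simp only [Function.Involutive.toPerm, Equiv.coe_fn_mk] at h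
  rw [← h]
  apply Finset.sum_congr rfl
  intro x _
  rw [bflip_bflip, chi_bflip]
  ring

lemma sum_chi_zero (S : Finset (Fin n)) (hS : S.Nonempty) :
    ∑ a ∈ Finset.univ.filter (fun a : Fin n → Bool => ∀ i, i ∉ S → a i = false),
      chi S a = 0 := by
  obtain ⟨i₀, hi₀⟩ := hS
  apply Finset.sum_involution (fun a _ => Function.update a i₀ (!(a i₀)))
  · intro a ha
    have h1 : chi S (Function.update a i₀ (!(a i₀))) = - chi S a := by
      rw [chi, chi, ← Finset.mul_prod_erase S _ hi₀, ← Finset.mul_prod_erase S _ hi₀]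
      have h2 : ∀ j ∈ S.erase i₀, sgn (Function.update a i₀ (!(a i₀)) j) = sgn (a j) := by
        intro j hj
        rw [Function.update_of_ne (Finset.ne_of_mem_erase hj)]
      rw [Function.update_self, sgn_not, Finset.prod_congr rfl h2]
      ring
    rw [h1]; ring
  · intro a ha _
    intro h
    have := congrFun h i₀
    rw [Function.update_self] at this
    exact (Bool.not_ne_self (a i₀)) this
  · intro a ha
    funext j
    by_cases h : j = i₀
    · subst h; simp
    · simp [Function.update_of_ne h]
  · intro a ha
    simp only [Finset.mem_filter, Finset.mem_univ, true_and] at ha ⊢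
    intro i hi
    have hne : i ≠ i₀ := by rintro rfl; exact hi hi₀
    rw [Function.update_of_ne hne]
    exact ha i hi

lemma W_eq_zero {k : ℕ} (p : (Fin n → Bool) → ℝ) (hindep : KWiseIndep n k p)
    (S : Finset (Fin n)) (hcard : S.card ≤ k) (hS : S.Nonempty) : W p S = 0 := by
  classical
  set proj : (Fin n → Bool) → (Fin n → Bool) := fun x i => if i ∈ S then x i else false with hproj
  set A : Finset (Fin n → Bool) :=
    Finset.univ.filter (fun a => ∀ i, i ∉ S → a i = false) with hA
  have hmaps : ∀ x : Fin n → Bool, x ∈ Finset.univ → proj x ∈ A := by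
    intro x _
    simp only [hA, Finset.mem_filter, Finset.mem_univ, true_and, hproj]
    intro i hi
    simp [hi]
  have hfib := Finset.sum_fiberwise_of_maps_to hmaps (fun x => p x * chi S x)
  have hW : W p S = ∑ a ∈ A, ∑ x ∈ Finset.univ.filter (fun x => proj x = a),
      p x * chi S x := by rw [W, ← hfib]
  have hinner : ∀ a ∈ A, (∑ x ∈ Finset.univ.filter (fun x => proj x = a), p x * chi S x)
      = chi S a * (1/2 : ℝ)^S.card := by
    intro a ha
    simp only [hA, Finset.mem_filter, Finset.mem_univ, true_and] at ha
    have hfilter : Finset.univ.filter (fun x => proj x = a)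
        = Finset.univ.filter (fun x => ∀ i ∈ S, x i = a i) := by
      apply Finset.filter_congr
      intro x _
      constructor
      · intro h i hi
        have := congrFun h i
        simpa [hproj, hi] using this
      · intro h
        funext i
        by_cases hi : i ∈ S
        · simp [hproj, hi, h i hi]
        · simp [hproj, hi, ha i hi]
    rw [hfilter]
    have hconst : ∀ x ∈ Finset.univ.filter (fun x => ∀ i ∈ S, x i = a i),
        p x * chi S x = p x * chi S a := by
      intro x hx
      simp only [Finset.mem_filter, Finset.mem_univ, true_and] at hx
      rw [chi_congr S hx]
    rw [Finset.sum_congr rfl hconst, ← Finset.sum_mul, hindep S hcard a]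
    ring
  rw [hW, Finset.sum_congr rfl hinner, ← Finset.sum_mul, sum_chi_zero S hS, zero_mul]

end RenyiAux

/-- If `X` is an `(n/2)`-wise independent random variable on `{0,1}^n` (`n` positive and
even), then the collision probability is at most `(n+1)/2^n`; equivalently the Rényi
entropy of order 2 satisfies `H₂(X) ≥ n − log₂(n+1)`. -/
theorem renyi_of_half_wise_indep (n : ℕ) (hn : 0 < n) (heven : Even n)
    (p : (Fin n → Bool) → ℝ) (hp0 : ∀ x, 0 ≤ p x) (hp1 : ∑ x, p x = 1)
    (hindep : KWiseIndep n (n / 2) p) :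
    (∑ x, (p x) ^ 2) ≤ ((n : ℝ) + 1) / 2 ^ n ∧
      -Real.logb 2 (∑ x, (p x) ^ 2) ≥ (n : ℝ) - Real.logb 2 ((n : ℝ) + 1) := by
  open RenyiAux Finset in
  classical
  -- Parseval
  have hpar : (2:ℝ)^n * ∑ x, p x ^ 2 = ∑ S : Finset (Fin n), W p S ^ 2 := by
    have := plancherel p p
    simp_rw [← sq] at this
    exact this.symm
  -- positivity from flips
  have hpos : ∀ i : Fin n,
      0 ≤ ∑ S : Finset (Fin n), (if i ∈ S then (-1:ℝ) else 1) * W p S ^ 2 := by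
    intro i
    have h1 := plancherel p (fun x => p (bflip i x))
    have h2 : ∑ S : Finset (Fin n), W p S * W (fun x => p (bflip i x)) S
        = ∑ S : Finset (Fin n), (if i ∈ S then (-1:ℝ) else 1) * W p S ^ 2 := by
      apply Finset.sum_congr rfl
      intro S _
      rw [W_bflip]
      ring
    rw [← h2, h1]
    apply mul_nonneg (by positivity)
    apply Finset.sum_nonneg
    intro x _
    exact mul_nonneg (hp0 x) (hp0 _)
  -- summing over i
  have hkey : 0 ≤ ∑ S : Finset (Fin n), ((n:ℝ) - 2 * S.card) * W p S ^ 2 := by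
    have h1 : 0 ≤ ∑ i : Fin n, ∑ S : Finset (Fin n),
        (if i ∈ S then (-1:ℝ) else 1) * W p S ^ 2 :=
      Finset.sum_nonneg fun i _ => hpos i
    rw [Finset.sum_comm] at h1
    calc (0:ℝ) ≤ _ := h1
      _ = ∑ S : Finset (Fin n), ((n:ℝ) - 2 * S.card) * W p S ^ 2 := by
          apply Finset.sum_congr rfl
          intro S _
          rw [← Finset.sum_mul]
          congr 1
          have : ∀ i : Fin n, (if i ∈ S then (-1:ℝ) else 1)
              = 1 - 2 * (if i ∈ S then (1:ℝ) else 0) := by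
            intro i; by_cases h : i ∈ S <;> simp [h] <;> norm_num
          simp_rw [this]
          rw [Finset.sum_sub_distrib, ← Finset.mul_sum, Finset.sum_boole]
          simp [Finset.filter_mem_eq_inter]
  have hWempty : W p (∅ : Finset (Fin n)) = 1 := by
    simp [W, chi, hp1]
  -- termwise bound on the erase-∅ part
  have hterm : ∀ S ∈ (Finset.univ : Finset (Finset (Fin n))).erase ∅,
      ((n:ℝ) - 2 * S.card) * W p S ^ 2 ≤ -2 * W p S ^ 2 := by
    intro S hS
    have hSne : S ≠ ∅ := (Finset.mem_erase.mp hS).1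
    by_cases hc : S.card ≤ n / 2
    · rw [W_eq_zero p hindep S hc (Finset.nonempty_iff_ne_empty.mpr hSne)]
      norm_num
    · push_neg at hc
      have h2 : (n:ℝ) - 2 * S.card ≤ -2 := by
        obtain ⟨m, hm⟩ := heven
        have hcard : n + 2 ≤ 2 * S.card := by omega
        have := (Nat.cast_le (α := ℝ)).mpr hcard
        push_cast at this
        linarith
      exact mul_le_mul_of_nonneg_right h2 (sq_nonneg _)
  -- split off the empty set
  have hsplit : ∀ f : Finset (Fin n) → ℝ,
      ∑ S : Finset (Fin n), f S
        = f ∅ + ∑ S ∈ (Finset.univ : Finset (Finset (Fin n))).erase ∅, f S := by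
    intro f
    exact (Finset.add_sum_erase _ f (Finset.mem_univ ∅)).symm
  set E : ℝ := ∑ S ∈ (Finset.univ : Finset (Finset (Fin n))).erase ∅, W p S ^ 2 with hE
  have hEnn : 0 ≤ E := Finset.sum_nonneg fun S _ => sq_nonneg _
  have hEle : E ≤ (n:ℝ) / 2 := by
    have h1 := hkey
    rw [hsplit (fun S => ((n:ℝ) - 2 * S.card) * W p S ^ 2)] at h1
    simp only [Finset.card_empty, Nat.cast_zero, hWempty] at h1
    have h2 : ∑ S ∈ (Finset.univ : Finset (Finset (Fin n))).erase ∅,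
        ((n:ℝ) - 2 * S.card) * W p S ^ 2
        ≤ ∑ S ∈ (Finset.univ : Finset (Finset (Fin n))).erase ∅, (-2) * W p S ^ 2 :=
      Finset.sum_le_sum hterm
    rw [← Finset.mul_sum, ← hE] at h2
    have h3 : (0:ℝ) ≤ ((n:ℝ) - 2 * 0) * 1 ^ 2 + (-2) * E := by
      calc (0:ℝ) ≤ _ := h1
        _ ≤ _ := by exact add_le_add_right h2 _
    norm_num at h3
    linarith
  have hColl : ∑ x, p x ^ 2 ≤ ((n:ℝ) + 1) / 2 ^ n := by
    have htot : (2:ℝ)^n * ∑ x, p x ^ 2 = 1 + E := by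
      rw [hpar, hsplit (fun S => W p S ^ 2), hWempty, ← hE]
      norm_num
    have h2n : (0:ℝ) < 2 ^ n := by positivity
    rw [le_div_iff₀ h2n]
    calc (∑ x, p x ^ 2) * 2 ^ n = 1 + E := by rw [mul_comm]; exact htot
      _ ≤ 1 + (n:ℝ)/2 := by linarith
      _ ≤ (n:ℝ) + 1 := by
          have : (0:ℝ) ≤ n := Nat.cast_nonneg n
          linarith
  refine ⟨hColl, ?_⟩
  -- entropy form
  have hCpos : 0 < ∑ x, p x ^ 2 := by
    have hex : ∃ x, p x ≠ 0 := by
      by_contra h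
      push_neg at h
      simp [h] at hp1
    obtain ⟨x, hx⟩ := hex
    have h1 : 0 < p x ^ 2 := by positivity
    exact lt_of_lt_of_le h1
      (Finset.single_le_sum (fun y _ => sq_nonneg (p y)) (Finset.mem_univ x))
  have hRpos : (0:ℝ) < ((n:ℝ) + 1) / 2 ^ n := by positivity
  have hlog : Real.logb 2 (∑ x, p x ^ 2) ≤ Real.logb 2 (((n:ℝ) + 1) / 2 ^ n) :=
    Real.logb_le_logb_of_le (by norm_num) hCpos hColl
  have hlogr : Real.logb 2 (((n:ℝ) + 1) / 2 ^ n)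
      = Real.logb 2 ((n:ℝ) + 1) - (n:ℝ) := by
    rw [Real.logb_div (by positivity) (by positivity)]
    rw [Real.logb_pow, Real.logb_self_eq_one (by norm_num)]
    ring
  rw [hlogr] at hlog
  linarith
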